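/- Assume the ensemble setup. For all n, k, p ≥ 1, only walks traversing every edge at least twice contribute: μ_{k,p}^{(n)} = n^{-(k/2+1)}·∑_{w ∈ Ŵ_{k,p}^{(n)}} E[∏_{j ∈ ZMod k} a w(j) w(j+1)]; equivalently, every closed walk w of length k that traverses some edge exactly once satisfies E[∏_{j ∈ ZMod k} a w(j) w(j+1)] = 0. -/

import Mathlib

open MeasureTheory ProbabilityTheory Filter

/-- The random matrix `A_n` with entries `a i j / √n` (indices in `{1,…,n}`). -/
noncomputable def matA {Ω : Type} (a : ℕ → ℕ → Ω → ℝ) (n : ℕ) (ω : Ω) :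
    Matrix (Fin n) (Fin n) ℝ :=
  Matrix.of fun u v => a (u.1 + 1) (v.1 + 1) ω / Real.sqrt n

/-- The `k`-th spectral moment `m_k^{(n)} = (1/n)·trace(A_n^k)`. -/
noncomputable def specMom {Ω : Type} (a : ℕ → ℕ → Ω → ℝ) (n k : ℕ) (ω : Ω) : ℝ :=
  (1 / (n : ℝ)) * Matrix.trace ((matA a n ω) ^ k)

/-- The `k`-th expected spectral moment `m̄_k^{(n)} = E[m_k^{(n)}]`. -/
noncomputable def expSpecMom {Ω : Type} [MeasurableSpace Ω] (P : Measure Ω)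
    (a : ℕ → ℕ → Ω → ℝ) (n k : ℕ) : ℝ :=
  ∫ ω, specMom a n k ω ∂P

/-- `σ̂_n = max_{1 ≤ i ≤ n} σ i`. -/
noncomputable def sigHat (σ : ℕ → ℝ) (n : ℕ) : ℝ := sSup (σ '' Set.Icc 1 n)

/-- `σ̌_n = min_{1 ≤ i ≤ n} σ i`. -/
noncomputable def sigCheck (σ : ℕ → ℝ) (n : ℕ) : ℝ := sInf (σ '' Set.Icc 1 n)

/-- Number of times the closed walk `w : ZMod k → Fin n` traverses the unordered edge `e`. -/
noncomputable def edgeCount (k n : ℕ) (e : Sym2 (Fin n)) (w : ZMod k → Fin n) : ℕ :=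
  Nat.card {j : ZMod k // s(w j, w (j + 1)) = e}

/-- Closed walks of length `k` on `Fin n` visiting exactly `p` distinct vertices. -/
def Wset (k n p : ℕ) : Set (ZMod k → Fin n) := {w | Nat.card (Set.range w) = p}

/-- Walks in `Wset k n p` that traverse each of their edges at least twice. -/
def WhatSet (k n p : ℕ) : Set (ZMod k → Fin n) :=
  {w ∈ Wset k n p | ∀ e : Sym2 (Fin n), 1 ≤ edgeCount k n e w → 2 ≤ edgeCount k n e w}

open Classical in
/-- `μ_{k,p}^{(n)} = n^{−(k/2+1)} ∑_{w ∈ W_{k,p}} E[∏_j a_{w(j) w(j+1)}]`. -/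
noncomputable def muW {Ω : Type} [MeasurableSpace Ω] (P : Measure Ω)
    (a : ℕ → ℕ → Ω → ℝ) (k p n : ℕ) (hk : k ≠ 0) : ℝ :=
  haveI : NeZero k := ⟨hk⟩
  (n : ℝ) ^ (-((k : ℝ) / 2 + 1)) *
    ∑ w : ZMod k → Fin n,
      if w ∈ Wset k n p then
        ∫ ω, ∏ j : ZMod k, a ((w j).1 + 1) ((w (j + 1)).1 + 1) ω ∂P
      else 0


/-- Canonical ordered index pair (in `{1,…,n}`) of an edge `{u,v}` of `Fin n`. -/
noncomputable def qOf (n : ℕ) (u v : Fin n) : {q : ℕ × ℕ // 1 ≤ q.1 ∧ q.1 ≤ q.2} :=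
  ⟨(min (u.1 + 1) (v.1 + 1), max (u.1 + 1) (v.1 + 1)), by omega⟩

lemma qOf_eq_sym2 {n : ℕ} {u v u' v' : Fin n} (h : qOf n u v = qOf n u' v') :
    s(u, v) = s(u', v') := by
  have h1 : min (u.1 + 1) (v.1 + 1) = min (u'.1 + 1) (v'.1 + 1) :=
    congrArg (fun q => q.1.1) h
  have h2 : max (u.1 + 1) (v.1 + 1) = max (u'.1 + 1) (v'.1 + 1) :=
    congrArg (fun q => q.1.2) h
  have : (u.1 = u'.1 ∧ v.1 = v'.1) ∨ (u.1 = v'.1 ∧ v.1 = u'.1) := by omega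
  rw [Sym2.eq_iff]
  rcases this with ⟨ha, hb⟩ | ⟨ha, hb⟩
  · exact Or.inl ⟨Fin.ext ha, Fin.ext hb⟩
  · exact Or.inr ⟨Fin.ext ha, Fin.ext hb⟩

lemma a_qOf {Ω : Type} (a : ℕ → ℕ → Ω → ℝ) (hsymm : ∀ i j, a i j = a j i)
    {n : ℕ} (u v : Fin n) :
    a (u.1 + 1) (v.1 + 1) = a (qOf n u v).1.1 (qOf n u v).1.2 := by
  rcases le_total (u.1 + 1) (v.1 + 1) with h | h
  · simp [qOf, min_eq_left h, max_eq_right h]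
  · simp only [qOf, min_eq_right h, max_eq_left h]
    exact hsymm _ _

/-- A closed walk traversing some edge exactly once has vanishing expected product. -/
lemma integral_prod_eq_zero_of_single_edge {Ω : Type} [MeasurableSpace Ω]
    (P : Measure Ω) [IsProbabilityMeasure P]
    (K : ℝ) (hK : 0 < K)
    (a : ℕ → ℕ → Ω → ℝ)
    (hmeas : ∀ i j, Measurable (a i j))
    (hsymm : ∀ i j, a i j = a j i)
    (hindep : iIndepFun
      (fun q : {q : ℕ × ℕ // 1 ≤ q.1 ∧ q.1 ≤ q.2} => a q.1.1 q.1.2) P)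
    (hmean : ∀ i j, 1 ≤ i → 1 ≤ j → ∫ ω, a i j ω ∂P = 0)
    (hbdd : ∀ i j, 1 ≤ i → 1 ≤ j → ∀ᵐ ω ∂P, |a i j ω| < K)
    {n k : ℕ} [NeZero k] (w : ZMod k → Fin n)
    (e : Sym2 (Fin n)) (h1 : edgeCount k n e w = 1) :
    ∫ ω, ∏ j : ZMod k, a ((w j).1 + 1) ((w (j + 1)).1 + 1) ω ∂P = 0 := by
  classical
  set I := {q : ℕ × ℕ // 1 ≤ q.1 ∧ q.1 ≤ q.2}
  set f : I → Ω → ℝ := fun q => a q.1.1 q.1.2 with hf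
  set q : ZMod k → I := fun j => qOf n (w j) (w (j + 1)) with hq
  have hfactor : ∀ j : ZMod k, a ((w j).1 + 1) ((w (j + 1)).1 + 1) = f (q j) :=
    fun j => a_qOf a hsymm (w j) (w (j + 1))
  -- extract the unique step traversing `e`
  rw [edgeCount, Nat.card_eq_one_iff_exists] at h1
  obtain ⟨⟨j0, hj0⟩, huniq⟩ := h1
  have huniq' : ∀ j : ZMod k, s(w j, w (j + 1)) = e → j = j0 := by
    intro j hj
    exact congrArg Subtype.val (huniq ⟨j, hj⟩)
  have hqne : ∀ j : ZMod k, j ≠ j0 → q j ≠ q j0 := by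
    intro j hj hcontra
    exact hj (huniq' j ((qOf_eq_sym2 hcontra).trans hj0))
  have hfmeas : ∀ i : I, Measurable (f i) := fun i => hmeas _ _
  -- independence of the isolated factor from the rest
  set T : Finset I := (Finset.univ.erase j0).image q with hT
  have hdisj : Disjoint ({q j0} : Finset I) T := by
    simp only [Finset.disjoint_singleton_left, hT, Finset.mem_image]
    rintro ⟨j, hjmem, hjq⟩
    exact hqne j (Finset.ne_of_mem_erase hjmem) hjq
  have hIndBig := hindep.indepFun_finset {q j0} T hdisj hfmeas
  have hmemT : ∀ j ∈ Finset.univ.erase j0, q j ∈ T := by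
    intro j hj; exact Finset.mem_image_of_mem q hj
  have hIndep : IndepFun (f (q j0))
      (fun ω => ∏ j ∈ Finset.univ.erase j0, f (q j) ω) P := by
    have hφ : Measurable (fun x : ({q j0} : Finset I) → ℝ =>
        x ⟨q j0, Finset.mem_singleton_self _⟩) := measurable_pi_apply _
    have hψ : Measurable (fun x : T → ℝ =>
        ∏ j ∈ (Finset.univ.erase j0).attach, x ⟨q j.1, hmemT j.1 j.2⟩) :=
      Finset.measurable_prod _ fun j _ => measurable_pi_apply _
    have := hIndBig.comp hφ hψ
    have heq : (fun ω => ∏ j ∈ Finset.univ.erase j0, f (q j) ω) =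
        (fun x : T → ℝ => ∏ j ∈ (Finset.univ.erase j0).attach, x ⟨q j.1, hmemT j.1 j.2⟩)
          ∘ (fun ω (i : T) => f i ω) := by
      funext ω
      simp [Finset.prod_attach (f := fun j => f (q j) ω)]
    rw [heq]
    exact this
  -- integrability
  have hbdd' : ∀ i : I, ∀ᵐ ω ∂P, |f i ω| ≤ K := by
    intro i
    filter_upwards [hbdd i.1.1 i.1.2 i.2.1 (le_trans i.2.1 i.2.2)] with ω h using h.le
  have hint1 : Integrable (f (q j0)) P := by
    refine ⟨(hfmeas _).aestronglyMeasurable, ?_⟩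
    apply MeasureTheory.HasFiniteIntegral.of_bounded (C := K)
    filter_upwards [hbdd' (q j0)] with ω h using by simpa [Real.norm_eq_abs] using h
  have hint2 : Integrable (fun ω => ∏ j ∈ Finset.univ.erase j0, f (q j) ω) P := by
    refine ⟨(Finset.measurable_prod _ fun j _ => hfmeas _).aestronglyMeasurable, ?_⟩
    apply MeasureTheory.HasFiniteIntegral.of_bounded
      (C := K ^ (Finset.univ.erase j0).card)
    have hall : ∀ᵐ ω ∂P, ∀ j : ZMod k, |f (q j) ω| ≤ K :=
      (MeasureTheory.ae_all_iff).2 fun j => hbdd' (q j)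
    filter_upwards [hall] with ω h
    rw [Real.norm_eq_abs, Finset.abs_prod]
    calc ∏ j ∈ Finset.univ.erase j0, |f (q j) ω|
        ≤ ∏ _j ∈ Finset.univ.erase j0, K :=
          Finset.prod_le_prod (fun j _ => abs_nonneg _) (fun j _ => h j)
      _ = K ^ (Finset.univ.erase j0).card := Finset.prod_const K
  -- put everything together
  have hsplit : (fun ω => ∏ j : ZMod k, a ((w j).1 + 1) ((w (j + 1)).1 + 1) ω) =
      fun ω => f (q j0) ω * ∏ j ∈ Finset.univ.erase j0, f (q j) ω := by
    funext ω
    rw [show (∏ j : ZMod k, a ((w j).1 + 1) ((w (j + 1)).1 + 1) ω) =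
        ∏ j : ZMod k, f (q j) ω from Finset.prod_congr rfl fun j _ => by
          rw [hfactor j]]
    exact (Finset.mul_prod_erase Finset.univ _ (Finset.mem_univ j0)).symm
  rw [hsplit]
  have hmul : ∫ ω, f (q j0) ω * ∏ j ∈ Finset.univ.erase j0, f (q j) ω ∂P =
      (∫ ω, f (q j0) ω ∂P) * ∫ ω, ∏ j ∈ Finset.univ.erase j0, f (q j) ω ∂P :=
    ProbabilityTheory.IndepFun.integral_mul_eq_mul_integral hIndep hint1.aestronglyMeasurable
      hint2.aestronglyMeasurable
  rw [hmul]
  have : ∫ ω, f (q j0) ω ∂P = 0 :=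
    hmean (q j0).1.1 (q j0).1.2 (q j0).2.1 (le_trans (q j0).2.1 (q j0).2.2)
  rw [this, zero_mul]

open Classical in
/-- **Only walks traversing every edge at least twice contribute**:
`μ_{k,p} = n^{−(k/2+1)} ∑_{w ∈ Ŵ_{k,p}} E[∏_j a_{w(j)w(j+1)}]`; equivalently, a closed walk
traversing some edge exactly once has vanishing expected product. -/
theorem mu_eq_sum_over_what {Ω : Type} [MeasurableSpace Ω]
    (P : Measure Ω) [IsProbabilityMeasure P]
    (K : ℝ) (hK : 0 < K)
    (σ : ℕ → ℝ) (hσpos : ∀ i, 1 ≤ i → 0 < σ i)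
    (a : ℕ → ℕ → Ω → ℝ)
    (hmeas : ∀ i j, Measurable (a i j))
    (hsymm : ∀ i j, a i j = a j i)
    (hindep : iIndepFun
      (fun q : {q : ℕ × ℕ // 1 ≤ q.1 ∧ q.1 ≤ q.2} => a q.1.1 q.1.2) P)
    (hmean : ∀ i j, 1 ≤ i → 1 ≤ j → ∫ ω, a i j ω ∂P = 0)
    (hvar : ∀ i j, 1 ≤ i → 1 ≤ j → ∫ ω, (a i j ω) ^ 2 ∂P = σ i * σ j)
    (hbdd : ∀ i j, 1 ≤ i → 1 ≤ j → ∀ᵐ ω ∂P, |a i j ω| < K)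
    (n k p : ℕ) (hn : 1 ≤ n) (hk : 1 ≤ k) (hp : 1 ≤ p) :
    letI : NeZero k := ⟨by omega⟩
    (muW P a k p n (by omega) =
      (n : ℝ) ^ (-((k : ℝ) / 2 + 1)) *
        ∑ w : ZMod k → Fin n,
          if w ∈ WhatSet k n p then
            ∫ ω, ∏ j : ZMod k, a ((w j).1 + 1) ((w (j + 1)).1 + 1) ω ∂P
          else 0) ∧
    (∀ w : ZMod k → Fin n, (∃ e : Sym2 (Fin n), edgeCount k n e w = 1) →
      ∫ ω, ∏ j : ZMod k, a ((w j).1 + 1) ((w (j + 1)).1 + 1) ω ∂P = 0) := by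

  haveI : NeZero k := ⟨by omega⟩
  classical
  have key : ∀ w : ZMod k → Fin n, (∃ e : Sym2 (Fin n), edgeCount k n e w = 1) →
      ∫ ω, ∏ j : ZMod k, a ((w j).1 + 1) ((w (j + 1)).1 + 1) ω ∂P = 0 := by
    rintro w ⟨e, he⟩
    exact integral_prod_eq_zero_of_single_edge P K hK a hmeas hsymm hindep hmean hbdd w e he
  refine ⟨?_, key⟩
  rw [muW]
  congr 1
  refine Finset.sum_congr rfl fun w _ => ?_
  by_cases hW : w ∈ Wset k n p
  · by_cases hWh : w ∈ WhatSet k n p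
    · rw [if_pos hW, if_pos hWh]
    · rw [if_pos hW, if_neg hWh]
      have : ∃ e : Sym2 (Fin n), edgeCount k n e w = 1 := by
        by_contra hcon
        push_neg at hcon
        exact hWh ⟨hW, fun e h1 => by
          have := hcon e; omega⟩
      exact key w this
  · have hWh : w ∉ WhatSet k n p := fun h => hW h.1
    rw [if_neg hW, if_neg hWh]
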